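/- Let K be a compact metric space, let k ≥ 2 be an even integer, and let X be a Borel measurable random variable with values in C(K) such that sup{E|X(t)|² : t ∈ K} < ∞. Then the following are equivalent: (ii) for all t₁,…,t_k ∈ K the product X(t₁)⋯X(t_k) is integrable and the function (t₁,…,t_k) ↦ E(X(t₁)⋯X(t_k)) is continuous on K^k; (iii) for every t ∈ K the random variable X(t)^k is integrable and the function t ↦ E(X(t)^k) is continuous on K. -/

import Mathlib

open MeasureTheory
open scoped BigOperators ENNReal NNReal
open Filter
open scoped Topology

lemma ennreal_squeeze {β γ : ℕ → ℝ≥0∞} {B : ℝ≥0∞} (hB : B ≠ ∞)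
    (hle : ∀ n, γ n ≤ β n) (hβ : Tendsto β atTop (𝓝 B))
    (hliminf : B ≤ liminf (fun n => β n - γ n) atTop) :
    Tendsto γ atTop (𝓝 0) := by
  rw [ENNReal.tendsto_nhds_zero]
  intro ε hε
  rcases eq_or_ne ε ∞ with rfl | hεtop
  · exact Eventually.of_forall fun n => le_top
  have hε2 : (0:ℝ≥0∞) < ε / 2 := ENNReal.div_pos hε.ne' (by norm_num)
  rcases eq_or_ne B 0 with rfl | hB0
  · have := hβ.eventually (gt_mem_nhds (show (0:ℝ≥0∞) < ε from hε))
    filter_upwards [this] with n hn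
    exact (hle n).trans hn.le
  · set c := B - ε / 2 with hc
    have hcB : c < B := by
      rcases le_total (ε/2) B with h | h
      · exact ENNReal.sub_lt_self hB hB0 hε2.ne'
      · calc c ≤ ε/2 - ε/2 := tsub_le_tsub h le_rfl
          _ = 0 := by simp
          _ < B := hB0.bot_lt
    have h1 : ∀ᶠ n in atTop, c < β n - γ n :=
      eventually_lt_of_lt_liminf (lt_of_lt_of_le hcB hliminf)
    have h2 : ∀ᶠ n in atTop, β n < B + ε / 2 :=
      hβ.eventually (gt_mem_nhds (ENNReal.lt_add_right hB hε2.ne'))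
    filter_upwards [h1, h2] with n h1n h2n
    have hcfin : c ≠ ∞ := (lt_of_le_of_lt (tsub_le_self) hB.lt_top).ne
    have key : γ n + c ≤ B + ε / 2 := by
      calc γ n + c ≤ γ n + (β n - γ n) := add_le_add le_rfl h1n.le
        _ = β n := add_tsub_cancel_of_le (hle n)
        _ ≤ B + ε / 2 := h2n.le
    refine (ENNReal.le_sub_of_add_le_right hcfin key).trans ?_
    rw [tsub_le_iff_right]
    rcases le_total (ε/2) B with h | h
    · calc B + ε / 2 = ε / 2 + (ε / 2 + (B - ε/2)) := by
            rw [add_tsub_cancel_of_le h]; ring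
        _ = ε + (B - ε/2) := by rw [← add_assoc, ENNReal.add_halves]
        _ = ε + c := by rw [hc]
        _ ≤ ε + c := le_rfl
    · calc B + ε / 2 ≤ ε / 2 + ε / 2 := add_le_add h le_rfl
        _ = ε := ENNReal.add_halves ε
        _ ≤ ε + c := le_self_add

/-- Generalized dominated convergence theorem with varying dominators. -/
lemma gdct {Ω : Type*} [MeasurableSpace Ω] {μ : Measure Ω}
    {f : ℕ → Ω → ℝ} {F : Ω → ℝ} {g : ℕ → Ω → ℝ} {G : Ω → ℝ}
    (hfm : ∀ n, AEStronglyMeasurable (f n) μ)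
    (hFi : Integrable F μ)
    (hgi : ∀ n, Integrable (g n) μ) (hGi : Integrable G μ)
    (hb : ∀ n ω, |f n ω| ≤ g n ω)
    (hf : ∀ ω, Tendsto (fun n => f n ω) atTop (𝓝 (F ω)))
    (hg : ∀ ω, Tendsto (fun n => g n ω) atTop (𝓝 (G ω)))
    (hgI : Tendsto (fun n => ∫ ω, g n ω ∂μ) atTop (𝓝 (∫ ω, G ω ∂μ))) :
    Tendsto (fun n => ∫ ω, f n ω ∂μ) atTop (𝓝 (∫ ω, F ω ∂μ)) := by
  have hg0 : ∀ n ω, 0 ≤ g n ω := fun n ω => (abs_nonneg _).trans (hb n ω)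
  have hG0 : ∀ ω, 0 ≤ G ω := fun ω => ge_of_tendsto' (hg ω) (fun n => hg0 n ω)
  have hFG : ∀ ω, |F ω| ≤ G ω := fun ω =>
    le_of_tendsto_of_tendsto' ((hf ω).abs) (hg ω) (fun n => hb n ω)
  have hfi : ∀ n, Integrable (f n) μ := fun n =>
    (hgi n).mono (hfm n) (Eventually.of_forall fun ω => by
      rw [Real.norm_eq_abs, Real.norm_eq_abs, abs_of_nonneg (hg0 n ω)]; exact hb n ω)
  refine tendsto_integral_of_L1 F hFi.1 (Eventually.of_forall hfi) ?_
  set γ : ℕ → ℝ≥0∞ := fun n => ∫⁻ ω, (‖f n ω - F ω‖₊ : ℝ≥0∞) ∂μ with hγ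
  set β : ℕ → ℝ≥0∞ := fun n => ∫⁻ ω, ENNReal.ofReal (g n ω + G ω) ∂μ with hβ
  set B : ℝ≥0∞ := ENNReal.ofReal (∫ ω, G ω ∂μ + ∫ ω, G ω ∂μ) with hBdef
  have hptle : ∀ n ω, (‖f n ω - F ω‖₊ : ℝ≥0∞) ≤ ENNReal.ofReal (g n ω + G ω) := by
    intro n ω
    rw [← enorm_eq_nnnorm, ← ofReal_norm]
    apply ENNReal.ofReal_le_ofReal
    calc ‖f n ω - F ω‖ ≤ ‖f n ω‖ + ‖F ω‖ := norm_sub_le _ _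
      _ ≤ g n ω + G ω := by
          rw [Real.norm_eq_abs, Real.norm_eq_abs]
          exact add_le_add (hb n ω) (hFG ω)
  have hle : ∀ n, γ n ≤ β n := fun n => lintegral_mono (hptle n)
  have hβeq : ∀ n, β n = ENNReal.ofReal (∫ ω, g n ω ∂μ + ∫ ω, G ω ∂μ) := by
    intro n
    rw [← integral_add (hgi n) hGi]
    exact (ofReal_integral_eq_lintegral_ofReal ((hgi n).add hGi)
      (Eventually.of_forall fun ω => add_nonneg (hg0 n ω) (hG0 ω))).symm
  have hβtendsto : Tendsto β atTop (𝓝 B) := by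
    have hβfun : β = fun n => ENNReal.ofReal (∫ ω, g n ω ∂μ + ∫ ω, G ω ∂μ) := funext hβeq
    rw [hβfun, hBdef]
    exact ENNReal.tendsto_ofReal (hgI.add tendsto_const_nhds)
  have hBfin : B ≠ ∞ := ENNReal.ofReal_ne_top
  have hliminf : B ≤ liminf (fun n => β n - γ n) atTop := by
    have hmeas : ∀ n, AEMeasurable (fun ω => ENNReal.ofReal (g n ω + G ω - |f n ω - F ω|)) μ := by
      intro n
      exact ENNReal.measurable_ofReal.comp_aemeasurable
        (((hgi n).1.aemeasurable.add hGi.1.aemeasurable).sub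
          (continuous_abs.measurable.comp_aemeasurable
            ((hfm n).aemeasurable.sub hFi.1.aemeasurable)))
    have fatou := lintegral_liminf_le' hmeas (μ := μ) (u := atTop)
    have hliminfpt : ∀ ω, liminf (fun n => ENNReal.ofReal (g n ω + G ω - |f n ω - F ω|)) atTop
        = ENNReal.ofReal (G ω + G ω) := by
      intro ω
      have : Tendsto (fun n => ENNReal.ofReal (g n ω + G ω - |f n ω - F ω|)) atTop
          (𝓝 (ENNReal.ofReal (G ω + G ω - |F ω - F ω|))) :=
        ENNReal.tendsto_ofReal
          (((hg ω).add tendsto_const_nhds).sub (((hf ω).sub tendsto_const_nhds).abs))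
      simpa using this.liminf_eq
    have hlhs : ∫⁻ ω, liminf (fun n => ENNReal.ofReal (g n ω + G ω - |f n ω - F ω|)) atTop ∂μ
        = B := by
      simp_rw [hliminfpt]
      rw [hBdef, ← integral_add hGi hGi]
      exact (ofReal_integral_eq_lintegral_ofReal (hGi.add hGi)
        (Eventually.of_forall fun ω => add_nonneg (hG0 ω) (hG0 ω))).symm
    have hterm : ∀ n, ∫⁻ ω, ENNReal.ofReal (g n ω + G ω - |f n ω - F ω|) ∂μ = β n - γ n := by
      intro n
      have hpt : ∀ ω, ENNReal.ofReal (g n ω + G ω - |f n ω - F ω|)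
          = ENNReal.ofReal (g n ω + G ω) - (‖f n ω - F ω‖₊ : ℝ≥0∞) := by
        intro ω
        rw [ENNReal.ofReal_sub _ (abs_nonneg _), ← Real.norm_eq_abs, ofReal_norm, enorm_eq_nnnorm]
      simp_rw [hpt]
      rw [lintegral_sub' (f := fun ω => ENNReal.ofReal (g n ω + G ω))
        (g := fun ω => (‖f n ω - F ω‖₊ : ℝ≥0∞)) ((hfm n).sub hFi.1).enorm
        (((hfi n).sub hFi).2).ne (Eventually.of_forall (hptle n))]
    rw [← hlhs]
    refine fatou.trans (le_of_eq ?_)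
    congr 1
    funext n
    exact hterm n
  exact ennreal_squeeze hBfin hle hβtendsto hliminf

lemma prod_le_sum_pow {k : ℕ} (hk : k ≠ 0) (hke : Even k) (a : Fin k → ℝ) :
    |∏ i, a i| ≤ ∑ i, (a i) ^ k := by
  have hne : (Finset.univ : Finset (Fin k)).Nonempty := by
    simpa [Finset.univ_nonempty_iff] using Fin.pos_iff_nonempty.mp (Nat.pos_of_ne_zero hk)
  obtain ⟨j, -, hj⟩ := Finset.exists_max_image Finset.univ (fun i => |a i|) hne
  calc |∏ i, a i| = ∏ i, |a i| := by rw [Finset.abs_prod]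
    _ ≤ ∏ _i : Fin k, |a j| :=
        Finset.prod_le_prod (fun i _ => abs_nonneg _) (fun i _ => hj i (Finset.mem_univ i))
    _ = |a j| ^ k := by rw [Finset.prod_const, Finset.card_univ, Fintype.card_fin]
    _ = (a j) ^ k := hke.pow_abs _
    _ ≤ ∑ i, (a i) ^ k :=
        Finset.single_le_sum (f := fun i => (a i) ^ k) (fun i _ => hke.pow_nonneg _) (Finset.mem_univ j)


/-- Let `K` be compact metric, `k ≥ 2` even, and `X` a Borel measurable
`C(K)`-valued random variable with `sup_t E|X(t)|² < ∞`. Then continuity (and integrability)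
of the joint moment function `(t₁,…,t_k) ↦ E(X(t₁)⋯X(t_k))` on `K^k` is equivalent to
continuity (and integrability) of `t ↦ E(X(t)^k)` on `K`. -/
theorem CK_even_moment_function_continuous_iff
    {K : Type*} [MetricSpace K] [CompactSpace K]
    [MeasurableSpace (ContinuousMap K ℝ)] [BorelSpace (ContinuousMap K ℝ)]
    {Ω : Type*} [MeasurableSpace Ω] {μ : Measure Ω} [IsProbabilityMeasure μ]
    {k : ℕ} (hk2 : 2 ≤ k) (hke : Even k)
    {X : Ω → ContinuousMap K ℝ} (hX : Measurable X)
    (hsup : ∃ C : ℝ≥0∞, C ≠ ⊤ ∧ ∀ t : K, ∫⁻ ω, (‖X ω t‖₊ : ℝ≥0∞) ^ 2 ∂μ ≤ C) :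
    ((∀ t : Fin k → K, Integrable (fun ω => ∏ i, X ω (t i)) μ) ∧
      Continuous fun t : Fin k → K => ∫ ω, (∏ i, X ω (t i)) ∂μ) ↔
    ((∀ t : K, Integrable (fun ω => (X ω t) ^ k) μ) ∧
      Continuous fun t : K => ∫ ω, (X ω t) ^ k ∂μ) := by
  have hk0 : k ≠ 0 := by omega
  have hXt : ∀ t : K, Measurable (fun ω => X ω t) := fun t =>
    (continuous_eval_const t).measurable.comp hX
  constructor
  · rintro ⟨hInt, hCont⟩
    constructor
    · intro t
      simpa [Finset.prod_const, Finset.card_univ] using hInt (fun _ => t)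
    · have heq : (fun t : K => ∫ ω, (X ω t) ^ k ∂μ)
          = (fun t : Fin k → K => ∫ ω, (∏ i, X ω (t i)) ∂μ) ∘ (fun t _ => t) := by
        funext t
        simp [Finset.prod_const, Finset.card_univ]
      rw [heq]
      exact hCont.comp (continuous_pi fun _ => continuous_id)
  · rintro ⟨hInt, hCont⟩
    -- integrability of products
    have hdom : ∀ t : Fin k → K, Integrable (fun ω => ∑ i, (X ω (t i)) ^ k) μ := fun t =>
      integrable_finset_sum _ (fun i _ => hInt (t i))
    have hprodInt : ∀ t : Fin k → K, Integrable (fun ω => ∏ i, X ω (t i)) μ := by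
      intro t
      refine (hdom t).mono ?_ (Eventually.of_forall fun ω => ?_)
      · exact (Finset.univ.measurable_prod fun i _ => hXt (t i)).aestronglyMeasurable
      · rw [Real.norm_eq_abs, Real.norm_eq_abs]
        refine (prod_le_sum_pow hk0 hke _).trans (le_abs_self _)
    refine ⟨hprodInt, ?_⟩
    -- continuity via sequential continuity and generalized DCT
    rw [continuous_iff_seqContinuous]
    intro u t hu
    have hu' : ∀ i, Tendsto (fun n => u n i) atTop (𝓝 (t i)) := fun i =>
      tendsto_pi_nhds.mp hu i
    refine gdct (f := fun n ω => ∏ i, X ω (u n i)) (F := fun ω => ∏ i, X ω (t i))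
      (g := fun n ω => ∑ i, (X ω (u n i)) ^ k) (G := fun ω => ∑ i, (X ω (t i)) ^ k)
      (fun n => (Finset.univ.measurable_prod fun i _ => hXt (u n i)).aestronglyMeasurable)
      (hprodInt t) (fun n => hdom (u n)) (hdom t)
      (fun n ω => prod_le_sum_pow hk0 hke _) ?_ ?_ ?_
    · intro ω
      exact tendsto_finset_prod _ fun i _ =>
        ((X ω).continuous.tendsto (t i)).comp (hu' i)
    · intro ω
      exact tendsto_finset_sum _ fun i _ =>
        (((X ω).continuous.tendsto (t i)).comp (hu' i)).pow k
    · have hIeq : ∀ s : Fin k → K, ∫ ω, ∑ i, (X ω (s i)) ^ k ∂μ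
          = ∑ i, ∫ ω, (X ω (s i)) ^ k ∂μ := fun s =>
        integral_finset_sum _ (fun i _ => hInt (s i))
      simp_rw [hIeq]
      exact tendsto_finset_sum _ fun i _ => (hCont.tendsto (t i)).comp (hu' i)
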